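/- Let A : ℝ → [0,1] satisfy: A(x) = 1 on a nonempty closed interval [a,b]; A = l on (-∞, a) where l is nondecreasing, right-continuous, and vanishes below some w₁ < a; A = r on (b, ∞) where r is nonincreasing, left-continuous, and vanishes above some w₂ > b. Then A is normal, fuzzy-convex (all α-cuts are intervals), upper semicontinuous, and has bounded support. -/

import Mathlib

open Topology Filter


/-- If A : ℝ → [0,1] equals 1 on [a,b], equals a nondecreasing right-continuous l
vanishing below w₁ < a on (-∞,a), and a nonincreasing left-continuous r vanishing
above w₂ > b on (b,∞), then A is normal, fuzzy-convex (all α-cuts convex),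
upper semicontinuous, and has bounded support. -/
theorem fuzzy_number_characterization_forward (A l r : ℝ → ℝ) (a b w₁ w₂ : ℝ)
    (hab : a ≤ b) (hA01 : ∀ x, A x ∈ Set.Icc (0:ℝ) 1)
    (hAcore : ∀ x ∈ Set.Icc a b, A x = 1)
    (hAl : ∀ x, x < a → A x = l x)
    (hlmono : MonotoneOn l (Set.Iio a))
    (hlrc : ∀ x ∈ Set.Iio a, ContinuousWithinAt l (Set.Ici x) x)
    (hw₁ : w₁ < a) (hl0 : ∀ x, x < w₁ → l x = 0)
    (hAr : ∀ x, b < x → A x = r x)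
    (hrmono : AntitoneOn r (Set.Ioi b))
    (hrlc : ∀ x ∈ Set.Ioi b, ContinuousWithinAt r (Set.Iic x) x)
    (hw₂ : b < w₂) (hr0 : ∀ x, w₂ < x → r x = 0) :
    (∃ x : ℝ, A x = 1) ∧
    (∀ α ∈ Set.Ioc (0:ℝ) 1, Convex ℝ {x : ℝ | α ≤ A x}) ∧
    UpperSemicontinuous A ∧
    Bornology.IsBounded {x : ℝ | 0 < A x} := by
  have hAa : A a = 1 := hAcore a ⟨le_refl a, hab⟩
  refine ⟨⟨a, hAa⟩, ?_, ?_, ?_⟩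
  · -- convexity of α-cuts
    intro α hα
    rw [convex_iff_ordConnected]
    refine ⟨fun x hx y hy z hz => ?_⟩
    simp only [Set.mem_setOf_eq] at hx hy ⊢
    rcases lt_or_ge z a with hza | hza
    · have hxa : x < a := lt_of_le_of_lt hz.1 hza
      rw [hAl z hza]
      rw [hAl x hxa] at hx
      exact hx.trans (hlmono hxa hza hz.1)
    · rcases le_or_gt z b with hzb | hzb
      · rw [hAcore z ⟨hza, hzb⟩]; exact hα.2
      · have hyb : b < y := lt_of_lt_of_le hzb hz.2
        rw [hAr z hzb]
        rw [hAr y hyb] at hy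
        exact hy.trans (hrmono hzb hyb hz.2)
  · -- upper semicontinuity
    intro x₀
    rcases lt_or_ge x₀ a with hx₀a | hx₀a
    · intro y hy
      rw [hAl x₀ hx₀a] at hy
      rw [← nhdsLT_sup_nhdsGE x₀, Filter.eventually_sup]
      constructor
      · filter_upwards [self_mem_nhdsWithin] with x hx
        have hxa : x < a := lt_trans hx hx₀a
        rw [hAl x hxa]
        exact lt_of_le_of_lt (hlmono hxa hx₀a (le_of_lt hx)) hy
      · have h1 : ∀ᶠ x in 𝓝[≥] x₀, l x < y := hlrc x₀ hx₀a (Iio_mem_nhds hy)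
        have h2 : ∀ᶠ x in 𝓝[≥] x₀, x < a :=
          mem_nhdsWithin_of_mem_nhds (Iio_mem_nhds hx₀a)
        filter_upwards [h1, h2] with x h1 h2
        rw [hAl x h2]; exact h1
    · rcases le_or_gt x₀ b with hx₀b | hx₀b
      · intro y hy
        rw [hAcore x₀ ⟨hx₀a, hx₀b⟩] at hy
        filter_upwards with x
        exact lt_of_le_of_lt (hA01 x).2 hy
      · intro y hy
        rw [hAr x₀ hx₀b] at hy
        rw [← nhdsLE_sup_nhdsGT x₀, Filter.eventually_sup]
        constructor
        · have h1 : ∀ᶠ x in 𝓝[≤] x₀, r x < y := hrlc x₀ hx₀b (Iio_mem_nhds hy)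
          have h2 : ∀ᶠ x in 𝓝[≤] x₀, b < x :=
            mem_nhdsWithin_of_mem_nhds (Ioi_mem_nhds hx₀b)
          filter_upwards [h1, h2] with x h1 h2
          rw [hAr x h2]; exact h1
        · filter_upwards [self_mem_nhdsWithin] with x hx
          have hxb : b < x := lt_trans hx₀b hx
          rw [hAr x hxb]
          exact lt_of_le_of_lt (hrmono hx₀b hxb (le_of_lt hx)) hy
  · -- bounded support
    refine (Metric.isBounded_Icc w₁ w₂).subset ?_
    intro x hx
    simp only [Set.mem_setOf_eq] at hx
    by_contra hc
    rw [Set.mem_Icc, not_and_or, not_le, not_le] at hc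
    rcases hc with h | h
    · rw [hAl x (h.trans hw₁), hl0 x h] at hx
      exact lt_irrefl 0 hx
    · rw [hAr x (hw₂.trans h), hr0 x h] at hx
      exact lt_irrefl 0 hx
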